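/- In an SLC group G with unique nonidentity commutator s and canonical involution *, every element of the form g + g* and every element g with g* = g is central in the group ring RG. -/

import Mathlib

open scoped commutatorElement

/-- A group is SLC with (unique nonidentity) commutator `s` if `s ≠ 1` is its only
nonidentity commutator and it has the limited commutativity property. -/
def IsSLC (G : Type*) [Group G] (s : G) : Prop :=
  s ≠ 1 ∧ (∃ g h : G, ⁅g, h⁆ = s) ∧ (∀ g h : G, ⁅g, h⁆ = 1 ∨ ⁅g, h⁆ = s) ∧
    (∀ g h : G, g * h = h * g →
      g ∈ Subgroup.center G ∨ h ∈ Subgroup.center G ∨ g * h ∈ Subgroup.center G)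

private lemma commute_of_commute_single {R : Type*} [CommRing R] {G : Type*} [Group G]
    (α : MonoidAlgebra R G)
    (h : ∀ h : G, α * MonoidAlgebra.single h 1 = MonoidAlgebra.single h 1 * α) :
    ∀ β : MonoidAlgebra R G, α * β = β * α := by
  intro β
  induction β using MonoidAlgebra.induction_on with
  | of g => simpa [MonoidAlgebra.of_apply] using h g
  | add f g hf hg => rw [mul_add, add_mul, hf, hg]
  | smul r f hf => rw [mul_smul_comm, smul_mul_assoc, hf]

/-- in an SLC group `G` with canonical involution `*`, every
element `g + g*` and every `*`-symmetric group element is central in `RG`. -/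
theorem slc_symmetric_elements_central {R : Type*} [CommRing R] {G : Type*} [Group G]
    (s : G) (hG : IsSLC G s)
    (st : G → G)
    (hstc : ∀ g : G, g ∈ Subgroup.center G → st g = g)
    (hstnc : ∀ g : G, g ∉ Subgroup.center G → st g = s * g) :
    (∀ g : G, ∀ β : MonoidAlgebra R G,
        (MonoidAlgebra.single g (1 : R) + MonoidAlgebra.single (st g) (1 : R)) * β =
          β * (MonoidAlgebra.single g (1 : R) + MonoidAlgebra.single (st g) (1 : R))) ∧
    (∀ g : G, st g = g → ∀ β : MonoidAlgebra R G,
        MonoidAlgebra.single g (1 : R) * β = β * MonoidAlgebra.single g (1 : R)) := by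
  obtain ⟨hs1, ⟨a, b, hab⟩, hcomm, _hlim⟩ := hG
  -- s has order 2
  have hs2 : s * s = 1 := by
    have hba : ⁅b, a⁆ = s⁻¹ := by rw [← hab, ← commutatorElement_inv]
    rcases hcomm b a with h | h
    · exact absurd (inv_eq_one.mp (hba ▸ h)) hs1
    · rw [hba] at h
      have h3 : s * s⁻¹ = 1 := mul_inv_cancel s
      rwa [h] at h3
  -- s is central
  have hscent : ∀ x : G, s * x = x * s := by
    intro x
    rcases hcomm s x with h | h
    · exact commutatorElement_eq_one_iff_mul_comm.mp h
    · exfalso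
      rw [commutatorElement_def] at h
      have h2 : s * x * s⁻¹ = s * x := by
        have := congrArg (· * x) h
        simpa [mul_assoc] using this
      have : s⁻¹ = 1 := by
        have := mul_left_cancel (a := s * x) (by simpa using h2)
        simpa using this
      exact hs1 (by simpa using congrArg (·⁻¹) this)
  -- the key single-element commutation for noncentral g
  have key : ∀ g : G, ∀ h : G,
      (MonoidAlgebra.single g (1 : R) + MonoidAlgebra.single (s * g) (1 : R)) *
          MonoidAlgebra.single h 1 =
        MonoidAlgebra.single h 1 *
          (MonoidAlgebra.single g (1 : R) + MonoidAlgebra.single (s * g) (1 : R)) := by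
    intro g h
    rw [add_mul, mul_add, MonoidAlgebra.single_mul_single, MonoidAlgebra.single_mul_single,
      MonoidAlgebra.single_mul_single, MonoidAlgebra.single_mul_single, one_mul]
    rcases hcomm g h with hc | hc
    · have hgh : g * h = h * g := commutatorElement_eq_one_iff_mul_comm.mp hc
      rw [hgh, mul_assoc, hgh, ← mul_assoc, hscent h, mul_assoc]
    · -- g * h * g⁻¹ * h⁻¹ = s, hence g * h = s * (h * g)
      rw [commutatorElement_def] at hc
      have hgh : g * h = s * (h * g) := by
        have := congrArg (· * (h * g)) hc
        simpa [mul_assoc] using this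
      have hsgh : s * g * h = h * g := by
        rw [mul_assoc, hgh, ← mul_assoc, hs2, one_mul]
      rw [hgh, hsgh, show h * (s * g) = s * (h * g) by
        rw [← mul_assoc, ← hscent h, mul_assoc], add_comm]
  constructor
  · intro g β
    by_cases hg : g ∈ Subgroup.center G
    · rw [hstc g hg]
      apply commute_of_commute_single
      intro h
      simp [add_mul, mul_add, MonoidAlgebra.single_mul_single, Subgroup.mem_center_iff.mp hg h]
    · rw [hstnc g hg]
      exact commute_of_commute_single _ (key g) β
  · intro g hgsym β
    by_cases hg : g ∈ Subgroup.center G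
    · apply commute_of_commute_single
      intro h
      simp [MonoidAlgebra.single_mul_single, Subgroup.mem_center_iff.mp hg h]
    · exfalso
      have : s * g = g := by rw [← hstnc g hg, hgsym]
      exact hs1 (by simpa using this)
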